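/- Two-sided orthogonal projection error decomposition: let Z = [Z₁ Z₂] ∈ ℝ^{n₁×n₁} and V = [V₁ V₂] ∈ ℝ^{n₂×n₂} be orthogonal matrices, A = Z C Vᵀ with C ∈ ℝ^{n₁×n₂} partitioned conformally as [[C₁₁,C₁₂],[C₂₁,C₂₂]]. Suppose P₅Z₁ and P₆V₁ are invertible for selection matrices P₅, P₆. Then the TEIM approximation Ã = Z₁(P₅Z₁)⁻¹(P₅ A P₆ᵀ)(V₁(P₆V₁)⁻¹)ᵀ equals Z₁C₁₁V₁ᵀ + Z₁(P₅Z₁)⁻¹(P₅Z₂)C₂₁V₁ᵀ + Z₁C₁₂(V₁(P₆V₁)⁻¹(P₆V₂))ᵀ + Z₁(P₅Z₁)⁻¹(P₅Z₂)C₂₂(V₁(P₆V₁)⁻¹(P₆V₂))ᵀ. -/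

import Mathlib

open Matrix

/-- Two-sided orthogonal projection error decomposition of the TEIM approximation for
A = Z C Vᵀ with Z = [Z₁ Z₂], V = [V₁ V₂] orthogonal and C partitioned in blocks. -/
theorem teim_error_decomposition {n₁ n₂ m₁ m₂ p₁ p₂ : ℕ}
    (Z₁ : Matrix (Fin n₁) (Fin m₁) ℝ) (Z₂ : Matrix (Fin n₁) (Fin p₁) ℝ)
    (V₁ : Matrix (Fin n₂) (Fin m₂) ℝ) (V₂ : Matrix (Fin n₂) (Fin p₂) ℝ)
    (C₁₁ : Matrix (Fin m₁) (Fin m₂) ℝ) (C₁₂ : Matrix (Fin m₁) (Fin p₂) ℝ)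
    (C₂₁ : Matrix (Fin p₁) (Fin m₂) ℝ) (C₂₂ : Matrix (Fin p₁) (Fin p₂) ℝ)
    (P₅ : Matrix (Fin m₁) (Fin n₁) ℝ) (P₆ : Matrix (Fin m₂) (Fin n₂) ℝ)
    (hP₅ : ∃ f : Fin m₁ → Fin n₁, Function.Injective f ∧
      ∀ i t, P₅ i t = if t = f i then 1 else 0)
    (hP₆ : ∃ g : Fin m₂ → Fin n₂, Function.Injective g ∧
      ∀ i t, P₆ i t = if t = g i then 1 else 0)
    (hZ₁ : (fromCols Z₁ Z₂)ᵀ * fromCols Z₁ Z₂ = 1)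
    (hZ₂ : fromCols Z₁ Z₂ * (fromCols Z₁ Z₂)ᵀ = 1)
    (hV₁ : (fromCols V₁ V₂)ᵀ * fromCols V₁ V₂ = 1)
    (hV₂ : fromCols V₁ V₂ * (fromCols V₁ V₂)ᵀ = 1)
    (h₅ : IsUnit (P₅ * Z₁)) (h₆ : IsUnit (P₆ * V₁))
    (A : Matrix (Fin n₁) (Fin n₂) ℝ)
    (hA : A = fromCols Z₁ Z₂ * fromBlocks C₁₁ C₁₂ C₂₁ C₂₂ * (fromCols V₁ V₂)ᵀ) :
    Z₁ * (P₅ * Z₁)⁻¹ * (P₅ * A * P₆ᵀ) * (V₁ * (P₆ * V₁)⁻¹)ᵀ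
      = Z₁ * C₁₁ * V₁ᵀ
        + Z₁ * (P₅ * Z₁)⁻¹ * (P₅ * Z₂) * C₂₁ * V₁ᵀ
        + Z₁ * C₁₂ * (V₁ * (P₆ * V₁)⁻¹ * (P₆ * V₂))ᵀ
        + Z₁ * (P₅ * Z₁)⁻¹ * (P₅ * Z₂) * C₂₂ * (V₁ * (P₆ * V₁)⁻¹ * (P₆ * V₂))ᵀ := by
  have h₅d : IsUnit (P₅ * Z₁).det := (Matrix.isUnit_iff_isUnit_det _).mp h₅
  have h₆d : IsUnit (P₆ * V₁).det := (Matrix.isUnit_iff_isUnit_det _).mp h₆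
  have h5 : (P₅ * Z₁)⁻¹ * (P₅ * Z₁) = 1 := Matrix.nonsing_inv_mul _ h₅d
  have h6 : (P₆ * V₁)⁻¹ * (P₆ * V₁) = 1 := Matrix.nonsing_inv_mul _ h₆d
  have hAe : A = (Z₁ * C₁₁ + Z₂ * C₂₁) * V₁ᵀ + (Z₁ * C₁₂ + Z₂ * C₂₂) * V₂ᵀ := by
    rw [hA, fromCols_mul_fromBlocks, transpose_fromCols, fromCols_mul_fromRows]
  have h6t : V₁ᵀ * P₆ᵀ * (V₁ᵀ * P₆ᵀ)⁻¹ = 1 := by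
    rw [← Matrix.transpose_mul]
    exact Matrix.mul_nonsing_inv _ (by rwa [Matrix.det_transpose])
  have hc5' : ∀ (N : Matrix (Fin m₁) (Fin n₂) ℝ),
      (P₅ * Z₁)⁻¹ * (P₅ * (Z₁ * N)) = N := by
    intro N
    rw [show P₅ * (Z₁ * N) = P₅ * Z₁ * N from (Matrix.mul_assoc _ _ _).symm,
      ← Matrix.mul_assoc, h5, Matrix.one_mul]
  have hc6 : ∀ (M : Matrix (Fin m₂) (Fin n₂) ℝ),
      V₁ᵀ * (P₆ᵀ * ((V₁ᵀ * P₆ᵀ)⁻¹ * M)) = M := by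
    intro M
    rw [← Matrix.mul_assoc, ← Matrix.mul_assoc, h6t, Matrix.one_mul]
  simp only [hAe, Matrix.mul_add, Matrix.add_mul, Matrix.transpose_mul,
    Matrix.transpose_nonsing_inv, Matrix.mul_assoc, hc5', hc6]
  abel
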